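/- arXiv:2512.06733 — 2 statements merged into one kernel-verified Lean document; each statement's English description precedes it below -/
import Mathlib

section
/- Let n ≥ 2, let τ₁, …, τ_{n−1} be 2×2 real orthogonal matrices, and let Q' be the augmented reflection-based Laplacian on ℝ^{2n} with designated index ℓ, unit normal n̂, and unit mirror direction L̂ (with n̂·L̂ = 0). Then the kernel of Q' is exactly the one-dimensional subspace spanned by V₀ = (S₁L̂, …, SₙL̂); in particular dim ker Q' = 1. -/
open Filter Topology Matrix

noncomputable section

abbrev Cfg (n : ℕ) := EuclideanSpace ℝ (Fin n × Fin 2)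

/-- Multiplication of a 2×2 matrix with a planar vector. -/
def mv (M : Matrix (Fin 2) (Fin 2) ℝ) (v : EuclideanSpace ℝ (Fin 2)) :
    EuclideanSpace ℝ (Fin 2) := WithLp.toLp 2 (M.mulVec v)

/-- Multiplication of a 2n×2n matrix with a configuration vector. -/
def mvC {n : ℕ} (M : Matrix (Fin n × Fin 2) (Fin n × Fin 2) ℝ) (v : Cfg n) : Cfg n :=
  WithLp.toLp 2 (M.mulVec v)

/-- The i-th planar component of a configuration. -/
def blk {n : ℕ} (p : Cfg n) (i : Fin n) : EuclideanSpace ℝ (Fin 2) :=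
  WithLp.toLp 2 (fun a => p (i, a))

/-- The action of the matrix-weighted Laplacian Q of the path graph on vertices 0, …, n-1
(with matrix weight τ e on the edge {e, e+1}):
(Qp)ᵢ = (pᵢ − τ_{i-1} p_{i-1}) + (pᵢ − τᵢᵀ p_{i+1}), where the first summand is omitted
for the first vertex and the second for the last. -/
def lapAct (n : ℕ) (τ : Fin (n - 1) → Matrix (Fin 2) (Fin 2) ℝ)
    (p : Fin n → EuclideanSpace ℝ (Fin 2)) (i : Fin n) : EuclideanSpace ℝ (Fin 2) :=
  (if h : 0 < (i : ℕ) then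
      p i - mv (τ ⟨(i : ℕ) - 1, by have := i.isLt; omega⟩)
        (p ⟨(i : ℕ) - 1, by have := i.isLt; omega⟩)
    else 0)
  + (if h : (i : ℕ) + 1 < n then
      p i - mv (τ ⟨(i : ℕ), by omega⟩)ᵀ (p ⟨(i : ℕ) + 1, h⟩)
    else 0)

/-- The action of the augmented reflection-based Laplacian Q', with designated index ℓ and
unit normal n̂: (Q'p)ᵢ = (Qp)ᵢ + [i = ℓ]·2(n̂·p_ℓ)n̂. -/
def lapAugAct (n : ℕ) (τ : Fin (n - 1) → Matrix (Fin 2) (Fin 2) ℝ) (ℓ : Fin n)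
    (nh : EuclideanSpace ℝ (Fin 2)) (p : Fin n → EuclideanSpace ℝ (Fin 2)) (i : Fin n) :
    EuclideanSpace ℝ (Fin 2) :=
  lapAct n τ p i + if i = ℓ then (2 * (inner ℝ nh (p ℓ) : ℝ)) • nh else 0

/-- V₀ = (S₁ L̂, …, Sₙ L̂). -/
def V0 {n : ℕ} (S : Fin n → Matrix (Fin 2) (Fin 2) ℝ) (L : EuclideanSpace ℝ (Fin 2)) : Cfg n :=
  WithLp.toLp 2 (fun (x : Fin n × Fin 2) => mv (S x.1) L x.2)

/-- Left endpoint of edge e of the path graph, as a vertex. -/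
def eL {n : ℕ} (e : Fin (n - 1)) : Fin n := ⟨e, by have := e.isLt; omega⟩
/-- Right endpoint of edge e of the path graph, as a vertex. -/
def eR {n : ℕ} (e : Fin (n - 1)) : Fin n := ⟨(e : ℕ) + 1, by have := e.isLt; omega⟩

lemma mv_sub (M : Matrix (Fin 2) (Fin 2) ℝ) (u v : EuclideanSpace ℝ (Fin 2)) :
    mv M (u - v) = mv M u - mv M v := by
  ext a
  simp [mv, Matrix.mulVec, dotProduct, mul_sub, Finset.sum_sub_distrib]
  fin_cases a <;> simp <;> ring

lemma mv_mul (M N : Matrix (Fin 2) (Fin 2) ℝ) (v : EuclideanSpace ℝ (Fin 2)) :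
    mv (M * N) v = mv M (mv N v) := by
  simp [mv, Matrix.mulVec_mulVec]
  refine ⟨?_, ?_⟩ <;> simp [Matrix.mul_apply, Fin.sum_univ_two] <;> ring

lemma mv_one (v : EuclideanSpace ℝ (Fin 2)) : mv 1 v = v := by simp [mv]

lemma mv_zero (M : Matrix (Fin 2) (Fin 2) ℝ) : mv M 0 = 0 := by
  ext a; simp [mv, Matrix.mulVec, dotProduct]

lemma mv_smul (M : Matrix (Fin 2) (Fin 2) ℝ) (c : ℝ) (v : EuclideanSpace ℝ (Fin 2)) :
    mv M (c • v) = c • mv M v := by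
  ext a
  show _ = c * _
  simp [mv, Matrix.mulVec, dotProduct]
  fin_cases a <;> simp <;> ring

lemma mv_cancel {M : Matrix (Fin 2) (Fin 2) ℝ} (hM : Mᵀ * M = 1)
    {v : EuclideanSpace ℝ (Fin 2)} (h : mv M v = 0) : v = 0 := by
  have := congrArg (mv Mᵀ) h
  rwa [← mv_mul, hM, mv_one, mv_zero] at this

lemma mv_inv {M : Matrix (Fin 2) (Fin 2) ℝ} (hM : Mᵀ * M = 1)
    (v : EuclideanSpace ℝ (Fin 2)) : mv Mᵀ (mv M v) = v := by
  rw [← mv_mul, hM, mv_one]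

lemma perp_span (nh Lh v : EuclideanSpace ℝ (Fin 2))
    (hnh : ‖nh‖ = 1) (hLh : ‖Lh‖ = 1) (hperp : (inner ℝ nh Lh : ℝ) = 0)
    (hv : (inner ℝ nh v : ℝ) = 0) :
    v = ((inner ℝ Lh v : ℝ)) • Lh := by
  have h3 : nh 0 ^ 2 + nh 1 ^ 2 = 1 := by
    have := real_inner_self_eq_norm_sq nh
    rw [hnh] at this
    rw [PiLp.inner_apply, Fin.sum_univ_two] at this
    simp at this
    nlinarith [this]
  have h4 : Lh 0 ^ 2 + Lh 1 ^ 2 = 1 := by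
    have := real_inner_self_eq_norm_sq Lh
    rw [hLh] at this
    rw [PiLp.inner_apply, Fin.sum_univ_two] at this
    simp at this
    nlinarith [this]
  have h2 : nh 0 * Lh 0 + nh 1 * Lh 1 = 0 := by
    have h := hperp
    simp [PiLp.inner_apply, Fin.sum_univ_two] at h
    linarith
  have h1 : nh 0 * v 0 + nh 1 * v 1 = 0 := by
    have h := hv
    simp [PiLp.inner_apply, Fin.sum_univ_two] at h
    linarith
  have hc : (inner ℝ Lh v : ℝ) = Lh 0 * v 0 + Lh 1 * v 1 := by
    simp [PiLp.inner_apply, Fin.sum_univ_two]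
    ring
  have hdc : Lh 1 * v 0 = Lh 0 * v 1 := by
    linear_combination (nh 0 * Lh 1 - nh 1 * Lh 0) * h1 +
      (nh 1 * v 0 - nh 0 * v 1) * h2 - (Lh 1 * v 0 - Lh 0 * v 1) * h3
  ext a
  rw [hc]
  show v a = (Lh 0 * v 0 + Lh 1 * v 1) * Lh a
  fin_cases a <;> simp only [Fin.mk_zero, Fin.mk_one, Fin.isValue]
  · linear_combination Lh 1 * hdc - v 0 * h4
  · linear_combination (- Lh 0) * hdc - v 1 * h4

/-- The kernel of the augmented reflection-based Laplacian Q' is exactly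
the one-dimensional subspace spanned by V₀ = (S₁L̂, …, SₙL̂); in particular
dim ker Q' = 1. -/
theorem stmt3 (n : ℕ) (hn : 2 ≤ n)
    (τ : Fin (n - 1) → Matrix (Fin 2) (Fin 2) ℝ)
    (hτ : ∀ e, (τ e)ᵀ * τ e = 1)
    (ℓ : Fin n) (nh Lh : EuclideanSpace ℝ (Fin 2))
    (hnh : ‖nh‖ = 1) (hLh : ‖Lh‖ = 1) (hperp : (inner ℝ nh Lh : ℝ) = 0)
    (S : Fin n → Matrix (Fin 2) (Fin 2) ℝ)
    (hSl : S ℓ = 1)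
    (hSup : ∀ e : Fin (n - 1), (ℓ : ℕ) ≤ (e : ℕ) → S (eR e) = τ e * S (eL e))
    (hSdown : ∀ e : Fin (n - 1), (e : ℕ) < (ℓ : ℕ) → S (eL e) = (τ e)ᵀ * S (eR e))
    (Qm : Matrix (Fin n × Fin 2) (Fin n × Fin 2) ℝ)
    (hQm : ∀ (p : Cfg n) (i : Fin n) (a : Fin 2),
      mvC Qm p (i, a) = lapAugAct n τ ℓ nh (blk p) i a) :
    (∀ p : Cfg n, mvC Qm p = 0 ↔ ∃ c : ℝ, p = c • V0 S Lh) ∧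
      Module.finrank ℝ (LinearMap.ker (Matrix.mulVecLin Qm)) = 1 := by
  have hℓn : (ℓ : ℕ) < n := ℓ.isLt
  have hττ : ∀ e, τ e * (τ e)ᵀ = 1 := fun e => mul_eq_one_comm.mp (hτ e)
  have hτM : ∀ (e : Fin (n-1)), ((τ e)ᵀ)ᵀ * (τ e)ᵀ = 1 := by
    intro e; rw [Matrix.transpose_transpose]; exact hττ e
  have hSall : ∀ e : Fin (n-1), S (eR e) = τ e * S (eL e) := by
    intro e
    rcases lt_or_ge (e : ℕ) (ℓ : ℕ) with h | h
    · rw [hSdown e h, ← Matrix.mul_assoc, hττ e, Matrix.one_mul]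
    · exact hSup e h
  have hnh0 : nh ≠ 0 := fun h => by simp [h] at hnh
  have hLh0 : Lh ≠ 0 := fun h => by simp [h] at hLh
  have main : ∀ p : Cfg n, mvC Qm p = 0 ↔ ∃ c : ℝ, p = c • V0 S Lh := by
    intro p
    constructor
    · -- forward direction
      intro hp
      set q : Fin n → EuclideanSpace ℝ (Fin 2) := blk p with hqdef
      have heq : ∀ i : Fin n, lapAugAct n τ ℓ nh q i = 0 := by
        intro i
        ext a
        have h2 := congrArg (fun v => v (i, a)) hp
        rw [hQm p i a] at h2
        exact h2
      set D : ℕ → EuclideanSpace ℝ (Fin 2) := fun k =>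
        if h : k < n - 1 then q (eR ⟨k, h⟩) - mv (τ ⟨k, h⟩) (q (eL ⟨k, h⟩)) else 0 with hD
      set r : EuclideanSpace ℝ (Fin 2) := (2 * (inner ℝ nh (q ℓ) : ℝ)) • nh with hr
      have keyN : ∀ k (hk : k < n),
          (if 0 < k then D (k - 1) else 0)
            + (if h : k + 1 < n then -(mv (τ ⟨k, by omega⟩)ᵀ (D k)) else 0)
            + (if k = (ℓ : ℕ) then r else 0) = 0 := by
        intro k hk
        have EA : (if h : 0 < k then
              q ⟨k, hk⟩ - mv (τ ⟨k - 1, by omega⟩) (q ⟨k - 1, by omega⟩) else 0)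
            = (if 0 < k then D (k - 1) else 0) := by
          by_cases h1 : 0 < k
          · rw [dif_pos h1, if_pos h1]
            simp only [hD]
            rw [dif_pos (show k - 1 < n - 1 by omega)]
            have i1 : eR (⟨k - 1, by omega⟩ : Fin (n-1)) = (⟨k, hk⟩ : Fin n) :=
              Fin.ext (by simp [eR]; omega)
            have i2 : eL (⟨k - 1, by omega⟩ : Fin (n-1)) = (⟨k - 1, by omega⟩ : Fin n) :=
              Fin.ext rfl
            rw [i1, i2]
          · rw [dif_neg h1, if_neg h1]
        have EB : (if h : k + 1 < n then
              q ⟨k, hk⟩ - mv (τ ⟨k, by omega⟩)ᵀ (q ⟨k + 1, h⟩) else 0)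
            = (if h : k + 1 < n then -(mv (τ ⟨k, by omega⟩)ᵀ (D k)) else 0) := by
          by_cases h2 : k + 1 < n
          · rw [dif_pos h2, dif_pos h2]
            simp only [hD]
            rw [dif_pos (show k < n - 1 by omega)]
            have i1 : eR (⟨k, by omega⟩ : Fin (n-1)) = (⟨k + 1, h2⟩ : Fin n) := Fin.ext rfl
            have i2 : eL (⟨k, by omega⟩ : Fin (n-1)) = (⟨k, hk⟩ : Fin n) := Fin.ext rfl
            rw [i1, i2, mv_sub, mv_inv (hτ ⟨k, by omega⟩), neg_sub]
          · rw [dif_neg h2, dif_neg h2]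
        have EC : (if k = (ℓ : ℕ) then r else 0)
            = (if (⟨k, hk⟩ : Fin n) = ℓ then r else 0) :=
          if_congr ⟨fun h => Fin.ext h, fun h => congrArg Fin.val h⟩ rfl rfl
        rw [← EA, ← EB, EC]
        exact heq ⟨k, hk⟩
      -- upward vanishing of the edge differences below ℓ
      have DA : ∀ k, k < (ℓ : ℕ) → D k = 0 := by
        intro k
        induction k with
        | zero =>
          intro hl
          have H := keyN 0 (by omega)
          rw [if_neg (by omega), if_neg (by omega), dif_pos (show 0 + 1 < n by omega),
            zero_add, add_zero] at H
          exact mv_cancel (hτM _) (neg_eq_zero.mp H)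
        | succ k ih =>
          intro hl
          have H := keyN (k + 1) (by omega)
          rw [if_pos (Nat.succ_pos k), if_neg (by omega),
            dif_pos (show k + 1 + 1 < n by omega), Nat.add_sub_cancel,
            ih (by omega), zero_add, add_zero] at H
          exact mv_cancel (hτM _) (neg_eq_zero.mp H)
      -- downward vanishing of the edge differences at and above ℓ
      have DB : ∀ m k, k < n - 1 → (ℓ : ℕ) ≤ k → n - 2 - k = m → D k = 0 := by
        intro m
        induction m with
        | zero =>
          intro k hk hl hm
          have H := keyN (k + 1) (by omega)
          rw [if_pos (Nat.succ_pos k), if_neg (by omega), dif_neg (by omega),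
            Nat.add_sub_cancel, add_zero, add_zero] at H
          exact H
        | succ m ih =>
          intro k hk hl hm
          have H := keyN (k + 1) (by omega)
          rw [if_pos (Nat.succ_pos k), if_neg (by omega),
            dif_pos (show k + 1 + 1 < n by omega), Nat.add_sub_cancel,
            ih (k + 1) (by omega) (by omega) (by omega), mv_zero, neg_zero,
            add_zero, add_zero] at H
          exact H
      have hDall : ∀ k, D k = 0 := by
        intro k
        by_cases hk : k < n - 1
        · rcases lt_or_ge k (ℓ : ℕ) with h | h
          · exact DA k h
          · exact DB (n - 2 - k) k hk h rfl
        · simp only [hD]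
          rw [dif_neg hk]
      have hC : (inner ℝ nh (q ℓ) : ℝ) = 0 := by
        have H := keyN (ℓ : ℕ) hℓn
        rw [if_pos rfl] at H
        have z1 : (if 0 < (ℓ : ℕ) then D ((ℓ : ℕ) - 1) else 0) = 0 := by
          split
          · exact hDall _
          · rfl
        have z2 : (if h : (ℓ : ℕ) + 1 < n then
            -(mv (τ ⟨(ℓ : ℕ), by omega⟩)ᵀ (D (ℓ : ℕ))) else 0) = 0 := by
          split
          · rw [hDall, mv_zero, neg_zero]
          · rfl
        rw [z1, z2, zero_add, zero_add, hr] at H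
        rcases smul_eq_zero.mp H with h | h
        · linarith
        · exact absurd h hnh0
      have step : ∀ e : Fin (n-1), q (eR e) = mv (τ e) (q (eL e)) := by
        intro e
        have h := hDall (e : ℕ)
        simp only [hD] at h
        rw [dif_pos e.isLt] at h
        have he : (⟨(e : ℕ), e.isLt⟩ : Fin (n-1)) = e := Fin.ext rfl
        rw [he] at h
        exact sub_eq_zero.mp h
      set c : ℝ := (inner ℝ Lh (q ℓ) : ℝ) with hcdef
      have hq0 : q ℓ = c • Lh := perp_span nh Lh (q ℓ) hnh hLh hperp hC
      have up : ∀ k (h : (ℓ : ℕ) + k < n),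
          q ⟨(ℓ : ℕ) + k, h⟩ = c • mv (S ⟨(ℓ : ℕ) + k, h⟩) Lh := by
        intro k
        induction k with
        | zero =>
          intro h
          have he : (⟨(ℓ : ℕ) + 0, h⟩ : Fin n) = ℓ := Fin.ext rfl
          rw [he, hq0, hSl, mv_one]
        | succ k ih =>
          intro h
          have hee : (ℓ : ℕ) + k < n - 1 := by omega
          have h1 : eR (⟨(ℓ : ℕ) + k, hee⟩ : Fin (n-1)) = ⟨(ℓ : ℕ) + (k + 1), h⟩ :=
            Fin.ext (by simp [eR]; omega)
          have h2 : eL (⟨(ℓ : ℕ) + k, hee⟩ : Fin (n-1)) = ⟨(ℓ : ℕ) + k, by omega⟩ :=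
            Fin.ext rfl
          have hs := step ⟨(ℓ : ℕ) + k, hee⟩
          rw [h1, h2, ih (by omega)] at hs
          have hS2 := hSup ⟨(ℓ : ℕ) + k, hee⟩ (Nat.le_add_right _ _)
          rw [h1, h2] at hS2
          rw [hs, mv_smul, ← mv_mul, ← hS2]
      have down : ∀ k (h : k ≤ (ℓ : ℕ)),
          q ⟨(ℓ : ℕ) - k, by omega⟩ = c • mv (S ⟨(ℓ : ℕ) - k, by omega⟩) Lh := by
        intro k
        induction k with
        | zero =>
          intro h
          have he : (⟨(ℓ : ℕ) - 0, by omega⟩ : Fin n) = ℓ := Fin.ext rfl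
          rw [he, hq0, hSl, mv_one]
        | succ k ih =>
          intro h
          have hee : (ℓ : ℕ) - (k + 1) < n - 1 := by omega
          have h1 : eR (⟨(ℓ : ℕ) - (k + 1), hee⟩ : Fin (n-1)) = ⟨(ℓ : ℕ) - k, by omega⟩ :=
            Fin.ext (by simp [eR]; omega)
          have h2 : eL (⟨(ℓ : ℕ) - (k + 1), hee⟩ : Fin (n-1)) = ⟨(ℓ : ℕ) - (k + 1), by omega⟩ :=
            Fin.ext rfl
          have hs : mv (τ ⟨(ℓ : ℕ) - (k + 1), hee⟩)ᵀ (q (eR ⟨(ℓ : ℕ) - (k + 1), hee⟩))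
              = q (eL ⟨(ℓ : ℕ) - (k + 1), hee⟩) := by
            rw [step ⟨(ℓ : ℕ) - (k + 1), hee⟩, mv_inv (hτ _)]
          rw [h1, h2, ih (by omega)] at hs
          have hS2 := hSdown ⟨(ℓ : ℕ) - (k + 1), hee⟩
            (show ((⟨(ℓ : ℕ) - (k + 1), hee⟩ : Fin (n-1)) : ℕ) < (ℓ : ℕ) by
              show (ℓ : ℕ) - (k + 1) < (ℓ : ℕ); omega)
          rw [h1, h2] at hS2
          rw [← hs, mv_smul, ← mv_mul, ← hS2]
      have final : ∀ i : Fin n, q i = c • mv (S i) Lh := by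
        intro i
        rcases le_or_gt (ℓ : ℕ) (i : ℕ) with h | h
        · have hx := up ((i : ℕ) - (ℓ : ℕ)) (by omega)
          have he : (⟨(ℓ : ℕ) + ((i : ℕ) - (ℓ : ℕ)), by omega⟩ : Fin n) = i :=
            Fin.ext (by simp; omega)
          rwa [he] at hx
        · have hx := down ((ℓ : ℕ) - (i : ℕ)) (by omega)
          have he : (⟨(ℓ : ℕ) - ((ℓ : ℕ) - (i : ℕ)), by omega⟩ : Fin n) = i :=
            Fin.ext (by simp; omega)
          rwa [he] at hx
      refine ⟨c, PiLp.ext fun x => ?_⟩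
      obtain ⟨i, a⟩ := x
      exact congrArg (fun v => v a) (final i)
    · -- backward direction
      rintro ⟨c, rfl⟩
      have hblk : ∀ j : Fin n, blk (c • V0 S Lh) j = c • mv (S j) Lh := by
        intro j; ext b; rfl
      ext x
      obtain ⟨i, a⟩ := x
      rw [hQm]
      suffices hsuf : lapAugAct n τ ℓ nh (blk (c • V0 S Lh)) i = 0 by
        rw [hsuf]; rfl
      have hi := i.isLt
      have Z1 : ∀ (h : 0 < (i : ℕ)),
          blk (c • V0 S Lh) i
            - mv (τ ⟨(i : ℕ) - 1, by omega⟩) (blk (c • V0 S Lh) ⟨(i : ℕ) - 1, by omega⟩)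
          = 0 := by
        intro h
        rw [hblk, hblk, mv_smul, ← mv_mul]
        have hS2 := hSall ⟨(i : ℕ) - 1, by omega⟩
        have he : eR (⟨(i : ℕ) - 1, by omega⟩ : Fin (n-1)) = i := Fin.ext (by simp [eR]; omega)
        have he2 : eL (⟨(i : ℕ) - 1, by omega⟩ : Fin (n-1)) = (⟨(i : ℕ) - 1, by omega⟩ : Fin n) :=
          Fin.ext rfl
        rw [he, he2] at hS2
        rw [← hS2, sub_self]
      have Z2 : ∀ (h : (i : ℕ) + 1 < n),
          blk (c • V0 S Lh) i
            - mv (τ ⟨(i : ℕ), by omega⟩)ᵀ (blk (c • V0 S Lh) ⟨(i : ℕ) + 1, h⟩)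
          = 0 := by
        intro h
        rw [hblk, hblk, mv_smul, ← mv_mul]
        have hS2 := hSall ⟨(i : ℕ), by omega⟩
        have he : eR (⟨(i : ℕ), by omega⟩ : Fin (n-1)) = (⟨(i : ℕ) + 1, h⟩ : Fin n) := Fin.ext rfl
        have he2 : eL (⟨(i : ℕ), by omega⟩ : Fin (n-1)) = i := Fin.ext rfl
        rw [he, he2] at hS2
        rw [hS2, ← Matrix.mul_assoc, hτ _, Matrix.one_mul, sub_self]
      rw [lapAugAct, lapAct]
      have hadd : ∀ X Y Z : EuclideanSpace ℝ (Fin 2),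
          X = 0 → Y = 0 → Z = 0 → X + Y + Z = 0 := by
        intro X Y Z hX hY hZ; rw [hX, hY, hZ, add_zero, add_zero]
      apply hadd
      · split
        · next h => exact Z1 h
        · rfl
      · split
        · next h => exact Z2 h
        · rfl
      · split
        · rw [hblk, hSl, mv_one, real_inner_smul_right, hperp, mul_zero, mul_zero, zero_smul]
        · rfl
  refine ⟨main, ?_⟩
  have hker : LinearMap.ker (Matrix.mulVecLin Qm) = Submodule.span ℝ {(V0 S Lh).ofLp} := by
    ext p
    rw [LinearMap.mem_ker, Submodule.mem_span_singleton]
    constructor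
    · intro h
      obtain ⟨c, hc⟩ := (main (WithLp.toLp 2 p)).mp (congrArg (WithLp.toLp 2) h)
      exact ⟨c, (congrArg WithLp.ofLp hc).symm⟩
    · rintro ⟨c, rfl⟩
      exact congrArg WithLp.ofLp ((main (c • V0 S Lh)).mpr ⟨c, rfl⟩)
  rw [hker]
  apply finrank_span_singleton
  intro h0
  have hL : Lh = 0 := by
    ext a
    have h1 := congrFun h0 (ℓ, a)
    simpa [V0, hSl, mv_one] using h1
  exact hLh0 hL
end
end

section
/- Let n ≥ 2 and let τ₁, …, τ_{n−1} be 2×2 real orthogonal matrices, with associated matrix-weighted Laplacian Q on ℝ^{2n}. Then for p ∈ ℝ^{2n}, Qp = 0 if and only if p_{i+1} = τᵢpᵢ for all i = 1,…,n−1; that is, the kernel of Q is exactly the set of configurations satisfying all the inter-agent symmetry relations encoded on the edges. -/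
open Filter Topology Matrix

noncomputable section

lemma mv_mv (M N : Matrix (Fin 2) (Fin 2) ℝ) (v : EuclideanSpace ℝ (Fin 2)) :
    mv M (mv N v) = mv (M * N) v := by
  simp only [mv, WithLp.ofLp_toLp, Matrix.mulVec_mulVec]

/-- For the matrix-weighted Laplacian Q, Qp = 0 if and only if
p_{i+1} = τᵢpᵢ for all i = 1, …, n−1: the kernel is exactly the set of configurations
satisfying all the inter-agent symmetry relations encoded on the edges. -/
theorem stmt7 (n : ℕ) (hn : 2 ≤ n)
    (τ : Fin (n - 1) → Matrix (Fin 2) (Fin 2) ℝ)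
    (hτ : ∀ e, (τ e)ᵀ * τ e = 1)
    (Qm : Matrix (Fin n × Fin 2) (Fin n × Fin 2) ℝ)
    (hQm : ∀ (p : Cfg n) (i : Fin n) (a : Fin 2),
      mvC Qm p (i, a) = lapAct n τ (blk p) i a) :
    ∀ p : Cfg n, mvC Qm p = 0 ↔ ∀ e : Fin (n - 1), blk p (eR e) = mv (τ e) (blk p (eL e)) := by
  intro p
  have hQ0 : mvC Qm p = 0 ↔ ∀ i : Fin n, lapAct n τ (blk p) i = 0 := by
    constructor
    · intro h i
      ext a
      have h1 : mvC Qm p (i, a) = (0 : Cfg n) (i, a) := by rw [h]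
      rw [hQm p i a] at h1
      simpa using h1
    · intro h
      ext ⟨i, a⟩
      rw [hQm p i a, h i]
      rfl
  rw [hQ0]
  constructor
  · intro hz
    suffices H : ∀ k (hk : k < n - 1),
        blk p ⟨k + 1, by omega⟩ = mv (τ ⟨k, hk⟩) (blk p ⟨k, by omega⟩) by
      intro e
      have := H e e.isLt
      simpa [eL, eR] using this
    intro k
    induction k with
    | zero =>
      intro hk
      have h0 := hz ⟨0, by omega⟩
      simp only [lapAct] at h0
      rw [dif_neg (by simp), dif_pos (by simp; omega)] at h0
      have h0' : blk p ⟨0, by omega⟩ - mv (τ ⟨0, hk⟩)ᵀ (blk p ⟨1, by omega⟩) = 0 := by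
        rw [← zero_add (_ - _)]; exact h0
      rw [sub_eq_zero] at h0'
      rw [h0', mv_mv, mul_eq_one_comm.mp (hτ _), mv_one]
    | succ k ih =>
      intro hk
      have hk' : k < n - 1 := by omega
      have hprev := ih hk'
      have h1 := hz ⟨k + 1, by omega⟩
      simp only [lapAct] at h1
      rw [dif_pos (by simp), dif_pos (by omega : k + 1 + 1 < n)] at h1
      have h1' : (blk p ⟨k + 1, by omega⟩ - mv (τ ⟨k, hk'⟩) (blk p ⟨k, by omega⟩))
          + (blk p ⟨k + 1, by omega⟩ - mv (τ ⟨k + 1, hk⟩)ᵀ (blk p ⟨k + 2, by omega⟩)) = 0 :=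
        h1
      rw [sub_eq_zero.mpr hprev, zero_add, sub_eq_zero] at h1'
      show blk p ⟨k + 2, by omega⟩ = _
      rw [h1', mv_mv, mul_eq_one_comm.mp (hτ _), mv_one]
  · intro h i
    simp only [lapAct]
    have t1 : (if _ : 0 < (i : ℕ) then
        blk p i - mv (τ ⟨(i : ℕ) - 1, by have := i.isLt; omega⟩)
          (blk p ⟨(i : ℕ) - 1, by have := i.isLt; omega⟩)
      else 0) = 0 := by
      split
      next hpos =>
        rw [sub_eq_zero]
        have he := h ⟨(i : ℕ) - 1, by have := i.isLt; omega⟩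
        simp only [eR, eL] at he
        have hi : (⟨(i : ℕ) - 1 + 1, by have := i.isLt; omega⟩ : Fin n) = i := by
          ext; simp; omega
        rw [hi] at he
        exact he
      next => rfl
    have t2 : (if h2 : (i : ℕ) + 1 < n then
        blk p i - mv (τ ⟨(i : ℕ), by omega⟩)ᵀ (blk p ⟨(i : ℕ) + 1, h2⟩)
      else 0) = 0 := by
      split
      next hlt =>
        rw [sub_eq_zero]
        have he := h ⟨(i : ℕ), by omega⟩
        simp only [eR, eL] at he
        rw [he, mv_mv, hτ, mv_one]
      next => rfl
    rw [t1, t2, add_zero]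
end
end
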